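/- Let X be a uniformly rotund Banach space with modulus δ_X, U ⊆ X open, ξ a gauge with ξ(r) ≤ δ_X(1/32), C a compact connected set that is (ξ,r₀) almost minimizing in U, x ∈ C, 0 < r < r₀, B(x,r) ⊆ U. Suppose C ∩ B(x,r) is a Lipschitz curve with endpoints x₀, x₁ and C ∩ ∂B(x,r) = {x₀,x₁}. Then ‖x₁ − x₀‖ ≥ (1 − ξ(r)) · 2r. -/

import Mathlib

open MeasureTheory

/-- A gauge: a nondecreasing function on `(0,∞)`, nonnegative, tending to `0` at `0⁺`. -/
def IsGauge (ξ : ℝ → ℝ) : Prop :=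
  MonotoneOn ξ (Set.Ioi 0) ∧ (∀ r : ℝ, 0 < r → 0 ≤ ξ r) ∧
    Filter.Tendsto ξ (nhdsWithin 0 (Set.Ioi 0)) (nhds 0)

/-- `C` is a compact connected set of finite length, `(ξ, r₀)` almost minimizing in `U`. -/
def AlmostMinimizing {X : Type*} [NormedAddCommGroup X] [NormedSpace ℝ X]
    [MeasurableSpace X] [BorelSpace X]
    (ξ : ℝ → ℝ) (r₀ : ℝ) (U : Set X) (C : Set X) : Prop :=
  IsCompact C ∧ IsConnected C ∧ μH[1] C < ⊤ ∧
    ∀ x ∈ C ∩ U, ∀ r : ℝ, 0 < r → r ≤ r₀ → Metric.closedBall x r ⊆ U →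
      ∀ C' : Set X, IsCompact C' → IsConnected C' →
        C' \ Metric.closedBall x r = C \ Metric.closedBall x r →
        μH[1] (C ∩ Metric.closedBall x r) ≤
          ENNReal.ofReal (1 + ξ r) * μH[1] (C' ∩ Metric.closedBall x r)

/-- For a preconnected set in a metric Borel space, `μH[1]` dominates distances of its points. -/
lemma dist_le_hausdorffMeasure {X : Type*} [MetricSpace X]
    [MeasurableSpace X] [BorelSpace X] {S : Set X} (hS : IsPreconnected S)
    {a b : X} (ha : a ∈ S) (hb : b ∈ S) : ENNReal.ofReal (dist a b) ≤ μH[1] S := by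
  have hf : LipschitzWith 1 (fun y => dist y a) := LipschitzWith.dist_left a
  have h1 : μH[1] ((fun y => dist y a) '' S) ≤ μH[1] S := by
    have := hf.hausdorffMeasure_image_le (d := 1) zero_le_one S
    simpa using this
  have hconn : IsPreconnected ((fun y => dist y a) '' S) :=
    hS.image _ hf.continuous.continuousOn
  have h2 : Set.Icc (0:ℝ) (dist b a) ⊆ (fun y => dist y a) '' S := by
    have h0 : (0:ℝ) ∈ (fun y => dist y a) '' S := ⟨a, ha, dist_self a⟩
    have hb' : dist b a ∈ (fun y => dist y a) '' S := ⟨b, hb, rfl⟩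
    exact hconn.Icc_subset h0 hb'
  calc ENNReal.ofReal (dist a b) = volume (Set.Icc (0:ℝ) (dist b a)) := by
        rw [Real.volume_Icc, sub_zero, dist_comm]
    _ ≤ volume ((fun y => dist y a) '' S) := measure_mono h2
    _ = μH[1] ((fun y => dist y a) '' S) := by rw [MeasureTheory.hausdorffMeasure_real]
    _ ≤ μH[1] S := h1

theorem stmt_13 {X : Type*} [NormedAddCommGroup X] [NormedSpace ℝ X]
    [MeasurableSpace X] [BorelSpace X]
    (δX : ℝ → ℝ)
    (hδX : ∀ ε : ℝ, δX ε =
      sInf {d : ℝ | ∃ x y : X, ‖x‖ ≤ 1 ∧ ‖y‖ ≤ 1 ∧ ε ≤ ‖x - y‖ ∧ d = 1 - ‖x + y‖ / 2})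
    (hUR : ∀ ε : ℝ, 0 < ε → ε ≤ 2 → 0 < δX ε)
    (U : Set X) (hU : IsOpen U) (ξ : ℝ → ℝ) (hξ : IsGauge ξ)
    (r₀ : ℝ) (C : Set X) (hC : AlmostMinimizing ξ r₀ U C)
    (x : X) (hx : x ∈ C) (r : ℝ) (hr : 0 < r) (hrr₀ : r < r₀)
    (hB : Metric.closedBall x r ⊆ U)
    (hξδ : ξ r ≤ δX (1 / 32))
    (x₀ x₁ : X) (γ : ℝ → X) (K : NNReal)
    (hlip : LipschitzOnWith K γ (Set.Icc 0 1)) (hinj : Set.InjOn γ (Set.Icc 0 1))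
    (hγ0 : γ 0 = x₀) (hγ1 : γ 1 = x₁)
    (himg : C ∩ Metric.closedBall x r = γ '' Set.Icc 0 1)
    (hsph : C ∩ Metric.sphere x r = {x₀, x₁}) :
    (1 - ξ r) * (2 * r) ≤ ‖x₁ - x₀‖ := by
  obtain ⟨hCcpt, hCconn, -, hmin⟩ := hC
  have hξr0 : 0 ≤ ξ r := hξ.2.1 r hr
  by_cases hξ1 : 1 < ξ r
  · nlinarith [norm_nonneg (x₁ - x₀)]
  push_neg at hξ1
  -- endpoints lie on the sphere
  have hx0s : x₀ ∈ C ∩ Metric.sphere x r := by rw [hsph]; exact Set.mem_insert _ _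
  have hx1s : x₁ ∈ C ∩ Metric.sphere x r := by
    rw [hsph]; exact Set.mem_insert_of_mem _ rfl
  have hd0 : dist x₀ x = r := hx0s.2
  have hd1 : dist x₁ x = r := hx1s.2
  -- the center belongs to the curve
  have hxB : x ∈ C ∩ Metric.closedBall x r := ⟨hx, Metric.mem_closedBall_self hr.le⟩
  obtain ⟨t, ht, hγt⟩ : ∃ t ∈ Set.Icc (0:ℝ) 1, γ t = x := by
    have h := hxB; rw [himg] at h; exact h
  -- lower bound : 2r ≤ μH¹(C ∩ B̄)
  haveI : NoAtoms (μH[1] : Measure X) := MeasureTheory.Measure.noAtoms_hausdorff X one_pos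
  set A₁ : Set X := γ '' Set.Icc 0 t with hA₁def
  set A₂ : Set X := γ '' Set.Icc t 1 with hA₂def
  have hsub1 : Set.Icc (0:ℝ) t ⊆ Set.Icc 0 1 := Set.Icc_subset_Icc le_rfl ht.2
  have hsub2 : Set.Icc t (1:ℝ) ⊆ Set.Icc 0 1 := Set.Icc_subset_Icc ht.1 le_rfl
  have hcont : ContinuousOn γ (Set.Icc 0 1) := hlip.continuousOn
  have hA₁conn : IsPreconnected A₁ := isPreconnected_Icc.image γ (hcont.mono hsub1)
  have hA₂conn : IsPreconnected A₂ := isPreconnected_Icc.image γ (hcont.mono hsub2)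
  have hx₀A₁ : x₀ ∈ A₁ := ⟨0, Set.left_mem_Icc.2 ht.1, hγ0⟩
  have hxA₁ : x ∈ A₁ := ⟨t, Set.right_mem_Icc.2 ht.1, hγt⟩
  have hxA₂ : x ∈ A₂ := ⟨t, Set.left_mem_Icc.2 ht.2, hγt⟩
  have hx₁A₂ : x₁ ∈ A₂ := ⟨1, Set.right_mem_Icc.2 ht.2, hγ1⟩
  have hA₂cpt : IsCompact A₂ := isCompact_Icc.image_of_continuousOn (hcont.mono hsub2)
  have hdisj : Disjoint (A₁ \ {x}) A₂ := by
    rw [Set.disjoint_left]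
    rintro y ⟨⟨s, hs, rfl⟩, hyx⟩ ⟨s', hs', h'⟩
    have hss : s' = s := hinj (hsub2 hs') (hsub1 hs) h'
    subst hss
    have hst : s' = t := le_antisymm hs.2 hs'.1
    exact hyx (by rw [Set.mem_singleton_iff, hst, hγt])
  have hlow : ENNReal.ofReal (2 * r) ≤ μH[1] (C ∩ Metric.closedBall x r) := by
    have h1 : ENNReal.ofReal r ≤ μH[1] (A₁ \ {x}) := by
      rw [measure_diff_null (@NullSingletonClass.measure_singleton _ _ _ this x)]
      have h := dist_le_hausdorffMeasure hA₁conn hx₀A₁ hxA₁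
      rwa [hd0] at h
    have h2 : ENNReal.ofReal r ≤ μH[1] A₂ := by
      have h := dist_le_hausdorffMeasure hA₂conn hx₁A₂ hxA₂
      rwa [hd1] at h
    calc ENNReal.ofReal (2 * r) = ENNReal.ofReal r + ENNReal.ofReal r := by
          rw [← ENNReal.ofReal_add hr.le hr.le]; ring_nf
      _ ≤ μH[1] (A₁ \ {x}) + μH[1] A₂ := add_le_add h1 h2
      _ = μH[1] ((A₁ \ {x}) ∪ A₂) := (measure_union hdisj hA₂cpt.measurableSet).symm
      _ ≤ μH[1] (A₁ ∪ A₂) :=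
          measure_mono (Set.union_subset_union_left _ Set.diff_subset)
      _ = μH[1] (C ∩ Metric.closedBall x r) := by
          rw [himg, hA₁def, hA₂def, ← Set.image_union,
            Set.Icc_union_Icc_eq_Icc ht.1 ht.2]
  -- the competitor
  set S : Set X := (C \ Metric.ball x r) ∪ segment ℝ x₀ x₁ with hSdef
  have hx₀B : x₀ ∈ Metric.closedBall x r := Metric.mem_closedBall.2 hd0.le
  have hx₁B : x₁ ∈ Metric.closedBall x r := Metric.mem_closedBall.2 hd1.le
  have hsegB : segment ℝ x₀ x₁ ⊆ Metric.closedBall x r :=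
    (convex_closedBall x r).segment_subset hx₀B hx₁B
  have hsegcpt : IsCompact (segment ℝ x₀ x₁) := by
    rw [segment_eq_image]
    exact isCompact_Icc.image (by fun_prop)
  have hScpt : IsCompact S := (hCcpt.diff Metric.isOpen_ball).union hsegcpt
  have hsphere : ∀ y, y ∈ C → y ∈ Metric.closedBall x r → y ∉ Metric.ball x r →
      y ∈ ({x₀, x₁} : Set X) := by
    intro y hyC hyB hyb
    rw [← hsph]
    refine ⟨hyC, ?_⟩
    have h1 : dist y x ≤ r := Metric.mem_closedBall.1 hyB
    have h2 : ¬ dist y x < r := fun h => hyb (Metric.mem_ball.2 h)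
    exact Metric.mem_sphere.2 (le_antisymm h1 (not_lt.1 h2))
  have hsegS : segment ℝ x₀ x₁ ⊆ S := Set.subset_union_right
  have hmemseg : ∀ y, y ∈ ({x₀, x₁} : Set X) → y ∈ segment ℝ x₀ x₁ := by
    intro y hy
    rcases hy with hy | hy
    · rw [hy]; exact left_mem_segment ℝ x₀ x₁
    · rw [Set.mem_singleton_iff] at hy; rw [hy]; exact right_mem_segment ℝ x₀ x₁
  have key : ∀ u v : Set X, IsClosed u → IsClosed v → S ⊆ u ∪ v →
      segment ℝ x₀ x₁ ⊆ u → segment ℝ x₀ x₁ ∩ v = ∅ → (S ∩ v).Nonempty →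
      (S ∩ (u ∩ v)).Nonempty := by
    rintro u v hu hv hcover hsegu hsegv ⟨q, hqS, hqv⟩
    have hqCb : q ∈ C \ Metric.ball x r := by
      rcases hqS with h | h
      · exact h
      · exact absurd (Set.mem_inter h hqv) (by rw [hsegv]; exact Set.notMem_empty q)
    have hcc : IsClosed ((u ∩ (Metric.ball x r)ᶜ) ∪ Metric.closedBall x r) :=
      (hu.inter (isClosed_compl_iff.2 Metric.isOpen_ball)).union Metric.isClosed_closedBall
    have hvc : IsClosed (v ∩ (Metric.ball x r)ᶜ) :=
      hv.inter (isClosed_compl_iff.2 Metric.isOpen_ball)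
    have hcov : C ⊆ ((u ∩ (Metric.ball x r)ᶜ) ∪ Metric.closedBall x r) ∪
        (v ∩ (Metric.ball x r)ᶜ) := by
      intro y hy
      by_cases hyb : y ∈ Metric.ball x r
      · exact Or.inl (Or.inr (Metric.ball_subset_closedBall hyb))
      · have hyS : y ∈ S := Or.inl ⟨hy, hyb⟩
        rcases hcover hyS with h | h
        · exact Or.inl (Or.inl ⟨h, hyb⟩)
        · exact Or.inr ⟨h, hyb⟩
    have hne1 : (C ∩ ((u ∩ (Metric.ball x r)ᶜ) ∪ Metric.closedBall x r)).Nonempty :=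
      ⟨x, hx, Or.inr (Metric.mem_closedBall_self hr.le)⟩
    have hne2 : (C ∩ (v ∩ (Metric.ball x r)ᶜ)).Nonempty := ⟨q, hqCb.1, hqv, hqCb.2⟩
    obtain ⟨y, hyC, hy1, hy2⟩ := isPreconnected_closed_iff.1 hCconn.isPreconnected
      _ _ hcc hvc hcov hne1 hne2
    rcases hy1 with ⟨hyu, hyb⟩ | hyB
    · exact ⟨y, Or.inl ⟨hyC, hy2.2⟩, hyu, hy2.1⟩
    · have hyseg : y ∈ segment ℝ x₀ x₁ := hmemseg y (hsphere y hyC hyB hy2.2)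
      exact ⟨y, hsegS hyseg, hsegu hyseg, hy2.1⟩
  have hSconn : IsConnected S := by
    refine ⟨⟨x₀, hsegS (left_mem_segment ℝ x₀ x₁)⟩, ?_⟩
    rw [isPreconnected_closed_iff]
    intro u v hu hv hcover hSu hSv
    by_cases hst : (segment ℝ x₀ x₁ ∩ u).Nonempty
    · by_cases hst' : (segment ℝ x₀ x₁ ∩ v).Nonempty
      · obtain ⟨y, hy⟩ := isPreconnected_closed_iff.1 (convex_segment x₀ x₁).isPreconnected
          u v hu hv (fun y hy => hcover (hsegS hy)) hst hst'
        exact ⟨y, hsegS hy.1, hy.2⟩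
      · have hempty : segment ℝ x₀ x₁ ∩ v = ∅ := Set.not_nonempty_iff_eq_empty.1 hst'
        have hsegu : segment ℝ x₀ x₁ ⊆ u := by
          intro y hy
          rcases hcover (hsegS hy) with h | h
          · exact h
          · exact absurd (Set.mem_inter hy h) (by rw [hempty]; exact Set.notMem_empty y)
        exact key u v hu hv hcover hsegu hempty hSv
    · have hempty : segment ℝ x₀ x₁ ∩ u = ∅ := Set.not_nonempty_iff_eq_empty.1 hst
      have hsegv : segment ℝ x₀ x₁ ⊆ v := by
        intro y hy
        rcases hcover (hsegS hy) with h | h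
        · exact absurd (Set.mem_inter hy h) (by rw [hempty]; exact Set.notMem_empty y)
        · exact h
      obtain ⟨y, hy1, hy2, hy3⟩ := key v u hv hu
        (by rw [Set.union_comm] at hcover; exact hcover) hsegv hempty hSu
      exact ⟨y, hy1, hy3, hy2⟩
  have hSdiff : S \ Metric.closedBall x r = C \ Metric.closedBall x r := by
    apply Set.Subset.antisymm
    · rintro y ⟨h | h, hyB⟩
      · exact ⟨h.1, hyB⟩
      · exact absurd (hsegB h) hyB
    · rintro y ⟨hyC, hyB⟩
      exact ⟨Or.inl ⟨hyC, fun h => hyB (Metric.ball_subset_closedBall h)⟩, hyB⟩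
  have happ := hmin x ⟨hx, hB (Metric.mem_closedBall_self hr.le)⟩ r hr hrr₀.le hB
    S hScpt hSconn hSdiff
  have hSB : S ∩ Metric.closedBall x r ⊆ segment ℝ x₀ x₁ := by
    rintro y ⟨h | h, hyB⟩
    · exact hmemseg y (hsphere y h.1 hyB h.2)
    · exact h
  have hmeas : μH[1] (S ∩ Metric.closedBall x r) ≤ ENNReal.ofReal ‖x₁ - x₀‖ := by
    calc μH[1] (S ∩ Metric.closedBall x r) ≤ μH[1] (segment ℝ x₀ x₁) := measure_mono hSB
      _ = edist x₀ x₁ := MeasureTheory.hausdorffMeasure_segment x₀ x₁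
      _ = ENNReal.ofReal ‖x₁ - x₀‖ := by rw [edist_dist, dist_eq_norm, norm_sub_rev]
  have hfinal : ENNReal.ofReal (2*r) ≤ ENNReal.ofReal ((1 + ξ r) * ‖x₁ - x₀‖) := by
    calc ENNReal.ofReal (2*r) ≤ μH[1] (C ∩ Metric.closedBall x r) := hlow
      _ ≤ ENNReal.ofReal (1 + ξ r) * μH[1] (S ∩ Metric.closedBall x r) := happ
      _ ≤ ENNReal.ofReal (1 + ξ r) * ENNReal.ofReal ‖x₁ - x₀‖ := mul_le_mul_right hmeas _
      _ = ENNReal.ofReal ((1 + ξ r) * ‖x₁ - x₀‖) := (ENNReal.ofReal_mul (by linarith)).symm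
  have h2r : 2*r ≤ (1 + ξ r) * ‖x₁ - x₀‖ :=
    (ENNReal.ofReal_le_ofReal_iff (mul_nonneg (by linarith) (norm_nonneg _))).1 hfinal
  nlinarith [norm_nonneg (x₁ - x₀),
    mul_le_mul_of_nonneg_left h2r (by linarith : (0:ℝ) ≤ 1 - ξ r),
    mul_nonneg (mul_nonneg hξr0 hξr0) (norm_nonneg (x₁ - x₀))]
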